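/- arXiv:1211.3699 — 2 statements merged into one kernel-verified Lean document; each statement's English description precedes it below -/
import Mathlib

section
/- Let Ψ : (0,∞) → (0,∞) be convex with Ψ(0+)/u → 0 bounded below by 0, satisfying ∫_θ^∞ dq/Ψ(q) < ∞, and let γ := liminf_{λ→∞} log Ψ(λ)/log λ with γ > 1. Define F(a) = ∫_a^∞ dq/Ψ(q) and v_t by F(v_t) = t. Then limsup_{t→0+} log(v_t)/log(1/t) ≥ 1/(γ − 1). -/
open Real Filter MeasureTheory Topology

set_option maxHeartbeats 2000000 in
/-- if `Ψ > 0` is convex on `(0,∞)` with `liminf_{u→0+} Ψ(u)/u ≥ 0`,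
satisfies Grey's condition, and `γ = liminf_{λ→∞} log Ψ(λ)/log λ > 1`, and `v_t`
is defined by `F(v_t) = t` where `F(a) = ∫_a^∞ dq/Ψ(q)`, then
`limsup_{t→0+} log(v_t)/log(1/t) ≥ 1/(γ-1)`. -/
theorem stmt_8 (θ : ℝ) (hθ : 0 < θ) (Ψ : ℝ → ℝ) (hmeas : Measurable Ψ)
    (hconv : ConvexOn ℝ (Set.Ioi 0) Ψ)
    (hpos : ∀ u : ℝ, 0 < u → 0 < Ψ u)
    (hlim0 : (0:ℝ) ≤ Filter.liminf (fun u => Ψ u / u) (nhdsWithin 0 (Set.Ioi 0)))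
    (hint : IntegrableOn (fun q => 1 / Ψ q) (Set.Ioi θ))
    (γ : ℝ)
    (hγ : Filter.liminf (fun l : ℝ => Real.log (Ψ l) / Real.log l) atTop = γ)
    (hγ1 : 1 < γ)
    (t₀ : ℝ) (ht₀ : 0 < t₀) (v : ℝ → ℝ)
    (hv : ∀ t : ℝ, 0 < t → t < t₀ →
      θ ≤ v t ∧ ∫ q in Set.Ioi (v t), 1 / Ψ q = t) :
    1 / (γ - 1) ≤
      Filter.limsup (fun t => Real.log (v t) / Real.log (1 / t))
        (nhdsWithin 0 (Set.Ioi 0)) := by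
  have hlog2 : 0 < Real.log 2 := Real.log_pos one_lt_two
  -- integrability on tails
  have hIoi : ∀ a : ℝ, θ ≤ a → IntegrableOn (fun q => 1 / Ψ q) (Set.Ioi a) := fun a ha =>
    hint.mono_set (Set.Ioi_subset_Ioi ha)
  have hnn : ∀ a : ℝ, 0 < a →
      (0 : ℝ → ℝ) ≤ᵐ[volume.restrict (Set.Ioi a)] fun q => 1 / Ψ q := by
    intro a ha
    filter_upwards [ae_restrict_mem measurableSet_Ioi] with q hq
    exact le_of_lt (one_div_pos.mpr (hpos q (ha.trans hq)))
  -- F is antitone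
  have hFanti : ∀ a b : ℝ, θ ≤ a → a ≤ b →
      (∫ q in Set.Ioi b, 1 / Ψ q) ≤ ∫ q in Set.Ioi a, 1 / Ψ q := by
    intro a b ha hab
    exact setIntegral_mono_set (hIoi a ha) (hnn a (hθ.trans_le ha))
      ((Set.Ioi_subset_Ioi hab).eventuallyLE)
  -- F tends to 0 at infinity
  have hsplit : ∀ b : ℝ, θ ≤ b →
      (∫ q in Set.Ioi b, 1 / Ψ q) = (∫ q in Set.Ioi θ, 1 / Ψ q) - ∫ x in θ..b, 1 / Ψ x := by
    intro b hb
    have hdisj : Disjoint (Set.Ioc θ b) (Set.Ioi b) := Set.Ioc_disjoint_Ioi le_rfl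
    have hunion := setIntegral_union (f := fun q => 1 / Ψ q) (μ := volume) hdisj
      measurableSet_Ioi (hint.mono_set Set.Ioc_subset_Ioi_self) (hIoi b hb)
    rw [Set.Ioc_union_Ioi_eq_Ioi hb] at hunion
    rw [intervalIntegral.integral_of_le hb, hunion]
    ring
  have hF0 : Tendsto (fun a => ∫ q in Set.Ioi a, 1 / Ψ q) atTop (𝓝 0) := by
    have h1 := intervalIntegral_tendsto_integral_Ioi θ hint tendsto_id
    have h2 : Tendsto (fun b => (∫ q in Set.Ioi θ, 1 / Ψ q) - ∫ x in θ..b, 1 / Ψ x) atTop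
        (𝓝 ((∫ q in Set.Ioi θ, 1 / Ψ q) - ∫ q in Set.Ioi θ, 1 / Ψ q)) :=
      tendsto_const_nhds.sub h1
    rw [sub_self] at h2
    refine h2.congr' ?_
    filter_upwards [eventually_ge_atTop θ] with b hb
    exact (hsplit b hb).symm
  -- coboundedness of the ratio
  have hfreqle : ∃ᶠ l in atTop, Real.log (Ψ l) / Real.log l ≤ γ + 1 := by
    by_contra h
    rw [Filter.not_frequently] at h
    have hmem : γ + 1 ∈ {a : ℝ | ∀ᶠ l in atTop, a ≤ Real.log (Ψ l) / Real.log l} :=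
      h.mono fun l hl => (not_le.mp hl).le
    rw [Filter.liminf_eq] at hγ
    by_cases hA : BddAbove {a : ℝ | ∀ᶠ l in atTop, a ≤ Real.log (Ψ l) / Real.log l}
    · have := le_csSup hA hmem
      rw [hγ] at this
      linarith
    · rw [Real.sSup_of_not_bddAbove hA] at hγ
      linarith
  have hcob : IsCoboundedUnder (· ≥ ·) atTop (fun l : ℝ => Real.log (Ψ l) / Real.log l) :=
    Filter.IsCobounded.of_frequently_le (l := γ + 1)
      (Filter.frequently_map.mpr hfreqle)
  -- some b₀ with Ψ θ < Ψ b₀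
  have hΨθ := hpos θ hθ
  have hexb : ∃ b, θ < b ∧ Ψ θ < Ψ b := by
    by_contra h
    push_neg at h
    have hfin := hint.measure_ge_lt_top (ε := 1 / Ψ θ) (by positivity)
    have hsub : Set.Ioi θ ⊆ {x | 1 / Ψ θ ≤ 1 / Ψ x} := fun x hx =>
      one_div_le_one_div_of_le (hpos x (hθ.trans hx)) (h x hx)
    have hlt : volume.restrict (Set.Ioi θ) (Set.Ioi θ) < ⊤ :=
      lt_of_le_of_lt (measure_mono hsub) hfin
    rw [Measure.restrict_apply measurableSet_Ioi, Set.inter_self, Real.volume_Ioi] at hlt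
    exact lt_irrefl _ hlt
  obtain ⟨b₀, hθb₀, hΨb₀⟩ := hexb
  have hb₀0 : 0 < b₀ := hθ.trans hθb₀
  have hs₀ : 0 < (Ψ b₀ - Ψ θ) / (b₀ - θ) := div_pos (by linarith) (by linarith)
  set s₀ := (Ψ b₀ - Ψ θ) / (b₀ - θ) with hs₀def
  have hlin : ∀ l, b₀ < l → Ψ b₀ + s₀ * (l - b₀) ≤ Ψ l := by
    intro l hl
    have hsl := hconv.slope_mono_adjacent (Set.mem_Ioi.mpr hθ)
      (Set.mem_Ioi.mpr (hb₀0.trans hl)) hθb₀ hl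
    have hlb : 0 < l - b₀ := by linarith
    have h3 := mul_le_mul_of_nonneg_right hsl hlb.le
    rw [div_mul_cancel₀ _ (ne_of_gt hlb)] at h3
    linarith
  -- the ratio is eventually bounded below
  have hbd : IsBoundedUnder (· ≥ ·) atTop (fun l : ℝ => Real.log (Ψ l) / Real.log l) := by
    refine ⟨1/2, ?_⟩
    rw [Filter.eventually_map]
    set K := max 1 (-Real.log (s₀ / 2)) with hKdef
    have hK : 0 < K := lt_max_of_lt_left one_pos
    filter_upwards [eventually_ge_atTop (max (2 * b₀) (Real.exp (2 * K)))] with l hl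
    have hl1 : Real.exp (2 * K) ≤ l := le_trans (le_max_right _ _) hl
    have hl2 : 2 * b₀ ≤ l := le_trans (le_max_left _ _) hl
    have hlpos : 0 < l := lt_of_lt_of_le (Real.exp_pos _) hl1
    have hloggel : 2 * K ≤ Real.log l := by
      rw [← Real.log_exp (2 * K)]
      exact Real.log_le_log (Real.exp_pos _) hl1
    have hlogpos : 0 < Real.log l := lt_of_lt_of_le (by positivity) hloggel
    have hb₀l : b₀ < l := by linarith
    have hΨlge : s₀ * (l / 2) ≤ Ψ l := by
      have h1 := hlin l hb₀l
      have hΨb₀pos := hpos b₀ hb₀0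
      nlinarith
    have hΨlpos := hpos l hlpos
    have hlog1 : Real.log (s₀ / 2) + Real.log l ≤ Real.log (Ψ l) := by
      rw [← Real.log_mul (by positivity) (ne_of_gt hlpos)]
      exact Real.log_le_log (by positivity) (by nlinarith)
    have hK1 : -K ≤ Real.log (s₀ / 2) := neg_le.mp (le_max_right _ _)
    rw [ge_iff_le, le_div_iff₀ hlogpos]
    linarith
  -- eventual power lower bound on Ψ
  set γ'' := (1 + γ) / 2 with hγ''def
  have hγ''1 : 1 < γ'' := by rw [hγ''def]; linarith
  have hγ''γ : γ'' < γ := by rw [hγ''def]; linarith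
  have hev : ∀ᶠ l in atTop, γ'' < Real.log (Ψ l) / Real.log l :=
    eventually_lt_of_lt_liminf (by rw [hγ]; exact hγ''γ) hbd
  obtain ⟨L, hL⟩ := eventually_atTop.mp (hev.and (eventually_ge_atTop (max θ 2)))
  have hLθ : θ ≤ L := le_trans (le_max_left _ _) (hL L le_rfl).2
  have hL2 : 2 ≤ L := le_trans (le_max_right _ _) (hL L le_rfl).2
  have hL0 : 0 < L := by linarith
  have hΨlow : ∀ q, L ≤ q → q ^ γ'' ≤ Ψ q := by
    intro q hq
    have hq2 : 2 ≤ q := le_trans hL2 hq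
    have hq0 : 0 < q := by linarith
    have hlogq : 0 < Real.log q := Real.log_pos (by linarith)
    have h1 := (hL q hq).1
    have h2 : γ'' * Real.log q < Real.log (Ψ q) := by
      rw [lt_div_iff₀ hlogq] at h1
      linarith
    rw [Real.rpow_def_of_pos hq0, ← Real.exp_log (hpos q hq0)]
    exact le_of_lt (Real.exp_lt_exp.mpr (by rwa [mul_comm]))
  have hFub : ∀ a, L ≤ a → (∫ q in Set.Ioi a, 1 / Ψ q) ≤ a ^ (1 - γ'') / (γ'' - 1) := by
    intro a ha
    have ha0 : 0 < a := lt_of_lt_of_le hL0 ha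
    have hexp : -γ'' < -1 := by linarith
    have hmono : (∫ q in Set.Ioi a, 1 / Ψ q) ≤ ∫ q in Set.Ioi a, q ^ (-γ'') := by
      refine setIntegral_mono_on (hIoi a (le_trans hLθ ha))
        (integrableOn_Ioi_rpow_of_lt hexp ha0) measurableSet_Ioi ?_
      intro q hq
      have hq0 : 0 < q := lt_trans ha0 hq
      rw [Real.rpow_neg hq0.le, ← one_div]
      exact one_div_le_one_div_of_le (Real.rpow_pos_of_pos hq0 _)
        (hΨlow q (ha.trans (le_of_lt hq)))
    rw [integral_Ioi_rpow_of_lt hexp ha0] at hmono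
    rw [show -γ'' + 1 = 1 - γ'' by ring] at hmono
    have heq : -a ^ (1 - γ'') / (1 - γ'') = a ^ (1 - γ'') / (γ'' - 1) := by
      have h1 : (1 : ℝ) - γ'' ≠ 0 := by linarith
      have h2 : γ'' - 1 ≠ 0 := by linarith
      field_simp
      ring
    rw [heq] at hmono
    exact hmono
  -- global bound for the limsup quantity
  have hC0 : 0 < 1 / (γ'' - 1) := by
    have : (0:ℝ) < γ'' - 1 := by linarith
    positivity
  set Cc := 1 / (γ'' - 1) with hCdef
  set B1 := max 0 (Real.log L) / Real.log 2 with hB1def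
  set B2 := (max 0 (Real.log Cc) / Real.log 2 + 1) / (γ'' - 1) with hB2def
  have hgbd : ∀ t, 0 < t → t < t₀ → t < 1/2 →
      Real.log (v t) / Real.log (1/t) ≤ max B1 B2 := by
    intro t ht0 htt₀ ht12
    obtain ⟨hvθt, hvFt⟩ := hv t ht0 htt₀
    have hvt0 : 0 < v t := lt_of_lt_of_le hθ hvθt
    have h1t : 2 < 1/t := by
      rw [lt_div_iff₀ ht0]
      linarith
    have hlog1t : Real.log 2 ≤ Real.log (1/t) := Real.log_le_log two_pos h1t.le
    have hlog1tpos : 0 < Real.log (1/t) := lt_of_lt_of_le hlog2 hlog1t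
    rcases le_or_gt (v t) L with hcase | hcase
    · refine le_trans ?_ (le_max_left B1 B2)
      rcases le_or_gt (Real.log (v t)) 0 with hneg | hpos'
      · refine le_trans (div_nonpos_iff.mpr (Or.inr ⟨hneg, hlog1tpos.le⟩)) ?_
        rw [hB1def]
        positivity
      · rw [hB1def]
        exact div_le_div₀ (by positivity) (le_max_of_le_right (Real.log_le_log hvt0 hcase))
          hlog2 hlog1t
    · refine le_trans ?_ (le_max_right B1 B2)
      have hvtL : L ≤ v t := hcase.le
      have hlogvt : 0 < Real.log (v t) := Real.log_pos (by linarith)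
      have ht_ub : t ≤ (v t) ^ (1 - γ'') * Cc := by
        have h := hFub (v t) hvtL
        rw [hvFt] at h
        rw [hCdef, ← div_eq_mul_one_div]
        exact h
    -- log estimate
      have hrp : 0 < (v t) ^ (1 - γ'') := Real.rpow_pos_of_pos hvt0 _
      have hlogt : Real.log t ≤ (1 - γ'') * Real.log (v t) + Real.log Cc := by
        have h := Real.log_le_log ht0 ht_ub
        rwa [Real.log_mul hrp.ne' (ne_of_gt hC0), Real.log_rpow hvt0] at h
      have hloginv : Real.log (1/t) = -Real.log t := by rw [one_div, Real.log_inv]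
      have hkey : (γ'' - 1) * Real.log (v t) ≤ Real.log Cc + Real.log (1/t) := by
        rw [hloginv]
        linarith
      have hg1 : 0 < γ'' - 1 := by linarith
      have hstep : Real.log (v t) / Real.log (1/t) ≤
          (Real.log Cc + Real.log (1/t)) / ((γ'' - 1) * Real.log (1/t)) := by
        rw [div_le_div_iff₀ hlog1tpos (by positivity)]
        calc Real.log (v t) * ((γ'' - 1) * Real.log (1/t))
            = ((γ'' - 1) * Real.log (v t)) * Real.log (1/t) := by ring
          _ ≤ (Real.log Cc + Real.log (1/t)) * Real.log (1/t) :=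
              mul_le_mul_of_nonneg_right hkey hlog1tpos.le
      refine le_trans hstep ?_
      have heq : (Real.log Cc + Real.log (1/t)) / ((γ'' - 1) * Real.log (1/t))
          = (Real.log Cc / Real.log (1/t) + 1) / (γ'' - 1) := by
        rw [div_add_one hlog1tpos.ne', div_div, mul_comm]
      have hnum : Real.log Cc / Real.log (1/t) ≤ max 0 (Real.log Cc) / Real.log 2 := by
        rcases le_or_gt (Real.log Cc) 0 with hc | hc
        · exact le_trans (div_nonpos_iff.mpr (Or.inr ⟨hc, hlog1tpos.le⟩)) (by positivity)
        · exact div_le_div₀ (by positivity) (le_max_right _ _) hlog2 hlog1t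
      rw [heq, hB2def]
      exact (div_le_div_iff_of_pos_right hg1).mpr (add_le_add_left hnum 1)
  have hgBdd : IsBoundedUnder (· ≤ ·) (nhdsWithin 0 (Set.Ioi 0))
      (fun t => Real.log (v t) / Real.log (1/t)) := by
    refine ⟨max B1 B2, ?_⟩
    rw [Filter.eventually_map]
    have hmem : Set.Ioo (0:ℝ) (min t₀ (1/2)) ∈ nhdsWithin 0 (Set.Ioi 0) :=
      Ioo_mem_nhdsGT_of_mem ⟨le_refl 0, lt_min ht₀ one_half_pos⟩
    filter_upwards [hmem] with t ht
    exact hgbd t ht.1 (lt_of_lt_of_le ht.2 (min_le_left _ _))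
      (lt_of_lt_of_le ht.2 (min_le_right _ _))
  -- key frequency estimate
  have key : ∀ c : ℝ, c < 1 / (γ - 1) →
      c ≤ Filter.limsup (fun t => Real.log (v t) / Real.log (1 / t))
        (nhdsWithin 0 (Set.Ioi 0)) := by
    intro c hc
    obtain ⟨γ', hγγ', hcγ'⟩ : ∃ γ', γ < γ' ∧ c < 1 / (γ' - 1) := by
      rcases le_or_gt c 0 with hc0 | hc0
      · refine ⟨γ + 1, by linarith, lt_of_le_of_lt hc0 ?_⟩
        have : (0:ℝ) < γ + 1 - 1 := by linarith
        positivity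
      · refine ⟨(γ + (1 + 1/c)) / 2, ?_, ?_⟩
        · have h1 : c * (γ - 1) < 1 := by
            have := (lt_div_iff₀ (by linarith : (0:ℝ) < γ - 1)).mp hc
            linarith
          have h2 : γ - 1 < 1/c := by
            rw [lt_div_iff₀ hc0]
            linarith [h1]
          linarith
        · have h1 : c * (γ - 1) < 1 := by
            have := (lt_div_iff₀ (by linarith : (0:ℝ) < γ - 1)).mp hc
            linarith
          have h2 : γ - 1 < 1/c := by
            rw [lt_div_iff₀ hc0]
            linarith [h1]
          have hd : (0:ℝ) < (γ + (1 + 1/c)) / 2 - 1 := by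
            have h1c : 0 < 1/c := by positivity
            linarith
          rw [lt_div_iff₀ hd]
          have hcc : c * (1/c) = 1 := by field_simp
          nlinarith
    have hγ'1 : 1 < γ' := lt_trans hγ1 hγγ'
    have hγ'0 : 0 < γ' := by linarith
    have hfreq' : ∃ᶠ l in atTop, Real.log (Ψ l) / Real.log l < γ' :=
      frequently_lt_of_liminf_lt hcob (by rw [hγ]; exact hγγ')
    -- eventual quotient bound
    have hquot : ∀ᶠ l in atTop,
        c ≤ Real.log (l/2) / ((γ' + 1) * Real.log 2 + (γ' - 1) * Real.log (l/2)) := by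
      rcases le_or_gt c 0 with hc0 | hc0
      · filter_upwards [eventually_ge_atTop (3:ℝ)] with l hl
        have hlog : 0 < Real.log (l/2) := Real.log_pos (by linarith)
        have hden : 0 < (γ' + 1) * Real.log 2 + (γ' - 1) * Real.log (l/2) :=
          add_pos (mul_pos (by linarith) hlog2) (mul_pos (by linarith) hlog)
        exact le_trans hc0 (div_nonneg hlog.le hden.le)
      · set Cst := (γ' + 1) * Real.log 2 with hCstdef
        have htend1 : Tendsto (fun l : ℝ => Real.log (l/2)) atTop atTop :=
          Real.tendsto_log_atTop.comp (tendsto_id.atTop_div_const two_pos)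
        have htend2 : Tendsto (fun x : ℝ => x / (Cst + (γ' - 1) * x)) atTop
            (𝓝 (1 / (γ' - 1))) := by
          have he : (fun x : ℝ => 1 / (Cst / x + (γ' - 1)))
              =ᶠ[atTop] fun x : ℝ => x / (Cst + (γ' - 1) * x) := by
            filter_upwards [eventually_ge_atTop (max 1 ((|Cst| + 1) / (γ' - 1)))] with x hx
            have hx1 : (1:ℝ) ≤ x := le_trans (le_max_left _ _) hx
            have hx0 : (0:ℝ) < x := by linarith
            have hx2 : (|Cst| + 1) / (γ' - 1) ≤ x := le_trans (le_max_right _ _) hx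
            have habs : |Cst| + 1 ≤ (γ' - 1) * x := by
              rw [div_le_iff₀ (by linarith : (0:ℝ) < γ' - 1)] at hx2
              linarith
            have hden : 0 < Cst + (γ' - 1) * x := by
              have := neg_abs_le Cst
              linarith
            field_simp
          have hlim : Tendsto (fun x : ℝ => 1 / (Cst / x + (γ' - 1))) atTop
              (𝓝 (1 / (0 + (γ' - 1)))) := by
            refine Tendsto.div tendsto_const_nhds ?_ (by simp; linarith)
            exact (tendsto_const_nhds.div_atTop tendsto_id).add tendsto_const_nhds
          rw [zero_add] at hlim
          exact hlim.congr' he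
        have hcomp := (htend2.comp htend1).eventually (eventually_gt_nhds hcγ')
        simp only [Function.comp] at hcomp
        exact hcomp.mono fun l hl => hl.le
    have hΨθev : ∀ᶠ l in atTop, Ψ θ ≤ l ^ γ' :=
      (tendsto_rpow_atTop hγ'0).eventually_ge_atTop (Ψ θ)
    have hfreqg : ∃ᶠ t in nhdsWithin 0 (Set.Ioi 0),
        c ≤ Real.log (v t) / Real.log (1/t) := by
      rw [Filter.frequently_iff]
      intro U hU
      obtain ⟨δ, hδ0, hδsub⟩ : ∃ δ, 0 < δ ∧ Set.Ioo (0:ℝ) δ ⊆ U := by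
        rcases (mem_nhdsGT_iff_exists_Ioo_subset' zero_lt_one).mp hU with ⟨u', hu', hsub⟩
        exact ⟨u', hu', hsub⟩
      have hε0 : 0 < min (min t₀ δ) (1/2) := lt_min (lt_min ht₀ hδ0) one_half_pos
      have hFev : ∀ᶠ l in atTop,
          (∫ q in Set.Ioi (l/2), 1 / Ψ q) / 2 < min (min t₀ δ) (1/2) := by
        have h := (hF0.comp (tendsto_id.atTop_div_const two_pos)).div_const 2
        rw [zero_div] at h
        have := h.eventually (eventually_lt_nhds hε0)
        simp only [Function.comp] at this
        exact this
      obtain ⟨l, hratio_l, ⟨⟨h2θ, h3l⟩, hΨθl, hFl, hquot_l⟩⟩ :=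
        (hfreq'.and_eventually (((eventually_ge_atTop (2*θ)).and (eventually_ge_atTop 3)).and
          (hΨθev.and (hFev.and hquot)))).exists
      have hθu : θ ≤ l/2 := by linarith
      have hu32 : (3:ℝ)/2 ≤ l/2 := by linarith
      have hu0 : 0 < l/2 := by linarith
      have hu1 : 1 < l/2 := by linarith
      have hl0 : 0 < l := by linarith
      have hlogu : 0 < Real.log (l/2) := Real.log_pos hu1
      have hΨl : Ψ l ≤ l ^ γ' := by
        have hlogl : 0 < Real.log l := Real.log_pos (by linarith)
        have h2 : Real.log (Ψ l) < γ' * Real.log l := by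
          rw [div_lt_iff₀ hlogl] at hratio_l
          linarith
        rw [Real.rpow_def_of_pos hl0, ← Real.exp_log (hpos l hl0)]
        exact (Real.exp_le_exp.mpr (by rw [mul_comm (Real.log l) γ']; linarith))
      have hmaxb : ∀ q ∈ Set.Ioc (l/2) l, Ψ q ≤ l ^ γ' := by
        intro q hq
        have hql : q ∈ segment ℝ θ l := by
          rw [segment_eq_Icc (by linarith : θ ≤ l)]
          exact ⟨le_trans hθu hq.1.le, hq.2⟩
        exact le_trans (hconv.le_on_segment (Set.mem_Ioi.mpr hθ) (Set.mem_Ioi.mpr hl0) hql)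
          (max_le hΨθl hΨl)
      have hrpos : 0 < l ^ γ' := Real.rpow_pos_of_pos hl0 _
      have hFlb : (l/2) * (l ^ γ')⁻¹ ≤ ∫ q in Set.Ioi (l/2), 1 / Ψ q := by
        have hIoc : IntegrableOn (fun q => 1 / Ψ q) (Set.Ioc (l/2) l) :=
          (hIoi (l/2) hθu).mono_set Set.Ioc_subset_Ioi_self
        have h1 : (∫ _q in Set.Ioc (l/2) l, (l ^ γ')⁻¹) ≤ ∫ q in Set.Ioc (l/2) l, 1 / Ψ q := by
          refine setIntegral_mono_on ((integrableOn_const_iff (C := (l ^ γ')⁻¹) enorm_ne_top).mpr (Or.inr ?_)) hIoc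
            measurableSet_Ioc ?_
          · rw [Real.volume_Ioc]
            exact ENNReal.ofReal_lt_top
          · intro q hq
            have hq0 : 0 < q := lt_trans hu0 hq.1
            rw [← one_div]
            exact one_div_le_one_div_of_le (hpos q hq0) (hmaxb q hq)
        have h2 : (∫ q in Set.Ioc (l/2) l, 1 / Ψ q) ≤ ∫ q in Set.Ioi (l/2), 1 / Ψ q :=
          setIntegral_mono_set (hIoi (l/2) hθu) (hnn (l/2) hu0)
            (Set.Ioc_subset_Ioi_self.eventuallyLE)
        have h3 : (∫ _q in Set.Ioc (l/2) l, (l ^ γ')⁻¹) = (l/2) * (l ^ γ')⁻¹ := by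
          rw [setIntegral_const, Real.volume_real_Ioc_of_le (by linarith),
            smul_eq_mul]
          congr 1
          ring
        linarith
      have hP : ∀ w : ℝ, 0 < w → w * ((2*w) ^ γ')⁻¹ = 2 ^ (-γ') * w ^ (1 - γ') := by
        intro w hw
        rw [Real.mul_rpow (by norm_num : (0:ℝ) ≤ 2) hw.le, mul_inv,
          Real.rpow_neg (by norm_num : (0:ℝ) ≤ 2),
          show (1:ℝ) - γ' = 1 + (-γ') by ring, Real.rpow_add hw, Real.rpow_one,
          Real.rpow_neg hw.le]
        ring
      have hl2u : l = 2 * (l/2) := by ring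
      have hFlb' : 2 ^ (-γ') * (l/2) ^ (1 - γ') ≤ ∫ q in Set.Ioi (l/2), 1 / Ψ q := by
        rw [← hP (l/2) hu0, ← hl2u]
        exact hFlb
      clear hFlb
      rename' hFlb' => hFlb
      have hPpos : 0 < 2 ^ (-γ' : ℝ) * (l/2) ^ (1 - γ') := by
        have h1 : (0:ℝ) < 2 ^ (-γ' : ℝ) := Real.rpow_pos_of_pos two_pos _
        have h2 : (0:ℝ) < (l/2) ^ (1 - γ') := Real.rpow_pos_of_pos hu0 _
        positivity
      have hFupos : 0 < ∫ q in Set.Ioi (l/2), 1 / Ψ q := lt_of_lt_of_le hPpos hFlb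
      set t := (∫ q in Set.Ioi (l/2), 1 / Ψ q) / 2 with htdef
      have ht0 : 0 < t := by rw [htdef]; positivity
      have htt₀ : t < t₀ := lt_of_lt_of_le hFl (le_trans (min_le_left _ _) (min_le_left _ _))
      have htδ : t < δ := lt_of_lt_of_le hFl (le_trans (min_le_left _ _) (min_le_right _ _))
      have ht12 : t < 1/2 := lt_of_lt_of_le hFl (min_le_right _ _)
      obtain ⟨hvθt, hvFt⟩ := hv t ht0 htt₀
      have hvtu : l/2 < v t := by
        by_contra hle
        push_neg at hle
        have hmono := hFanti (v t) (l/2) hvθt hle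
        rw [hvFt] at hmono
        rw [htdef] at hmono
        linarith
      refine ⟨t, hδsub ⟨ht0, htδ⟩, ?_⟩
      have hvt0 : 0 < v t := lt_of_lt_of_le hθ hvθt
      have hlogvt : Real.log (l/2) ≤ Real.log (v t) := Real.log_le_log hu0 hvtu.le
      have hlog1t_pos : 0 < Real.log (1/t) := by
        apply Real.log_pos
        rw [lt_div_iff₀ ht0]
        linarith
      have hD : 0 < (γ' + 1) * Real.log 2 + (γ' - 1) * Real.log (l/2) :=
        add_pos (mul_pos (by linarith) hlog2) (mul_pos (by linarith) hlogu)
      have hlog1t_ub : Real.log (1/t) ≤ (γ' + 1) * Real.log 2 + (γ' - 1) * Real.log (l/2) := by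
        have h1 : 2 ^ (-γ' : ℝ) * (l/2) ^ (1 - γ') / 2 ≤ t := by
          rw [htdef]
          linarith
        have h2 : Real.log (2 ^ (-γ' : ℝ) * (l/2) ^ (1 - γ') / 2) ≤ Real.log t :=
          Real.log_le_log (by positivity) h1
        have h3 : Real.log (2 ^ (-γ' : ℝ) * (l/2) ^ (1 - γ') / 2)
            = -γ' * Real.log 2 + (1 - γ') * Real.log (l/2) - Real.log 2 := by
          rw [Real.log_div (by positivity) (by norm_num),
            Real.log_mul (Real.rpow_pos_of_pos two_pos _).ne'
              (Real.rpow_pos_of_pos hu0 _).ne',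
            Real.log_rpow two_pos, Real.log_rpow hu0]
        rw [one_div, Real.log_inv]
        rw [h3] at h2
        linarith
      calc c ≤ Real.log (l/2) / ((γ' + 1) * Real.log 2 + (γ' - 1) * Real.log (l/2)) := hquot_l
        _ ≤ Real.log (l/2) / Real.log (1/t) := by
            apply div_le_div_of_nonneg_left hlogu.le hlog1t_pos hlog1t_ub
        _ ≤ Real.log (v t) / Real.log (1/t) :=
            (div_le_div_iff_of_pos_right hlog1t_pos).mpr hlogvt
    exact le_limsup_of_frequently_le hfreqg hgBdd
  refine le_of_forall_lt fun c hc => ?_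
  have hmid : c < (c + 1/(γ-1))/2 := by linarith
  have h2 : (c + 1/(γ-1))/2 < 1/(γ-1) := by linarith
  exact lt_of_lt_of_le hmid (key _ h2)
end

section
/- Let R : [θ,∞) → (0,∞) be regularly varying at +∞ with index ρ > −1, i.e., R(x) = x^ρ ℓ(x) with ℓ slowly varying. Let Ψ : [θ,∞) → (0,∞) be measurable with Ψ(z) = O(z²) as z → ∞. Then ∫_θ^∞ exp(∫_θ^z R(u) du) · (1/Ψ(z)) dz = ∞. -/
open Real Filter MeasureTheory

set_option maxHeartbeats 1000000

lemma aux_sq_le_16pow (k : ℕ) : ((k : ℝ) + 1) ^ 2 ≤ 16 ^ k := by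
  induction k with
  | zero => norm_num
  | succ n ih =>
    have hn : (0:ℝ) ≤ n := n.cast_nonneg
    push_cast [pow_succ]
    push_cast at ih
    nlinarith [ih, hn]

/-- if `R` is regularly varying at `+∞` with index `ρ > -1`
(`R x = x^ρ ℓ(x)` with `ℓ` slowly varying) and `Ψ > 0` is measurable with
`Ψ(z) = O(z²)` as `z → ∞`, then `∫_θ^∞ exp(∫_θ^z R(u) du) / Ψ(z) dz = ∞`. -/
theorem stmt_10 (θ ρ : ℝ) (hθ : 0 < θ) (hρ : -1 < ρ)
    (R ℓ Ψ : ℝ → ℝ)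
    (hRmeas : Measurable R)
    (hRpos : ∀ x, θ ≤ x → 0 < R x)
    (hRloc : ∀ z, θ ≤ z → IntervalIntegrable R MeasureTheory.volume θ z)
    (hℓpos : ∀ x, θ ≤ x → 0 < ℓ x)
    (hℓslow : ∀ c : ℝ, 0 < c →
      Tendsto (fun x => ℓ (c * x) / ℓ x) atTop (nhds 1))
    (hR : ∀ x, θ ≤ x → R x = x ^ ρ * ℓ x)
    (hΨmeas : Measurable Ψ)
    (hΨpos : ∀ z, θ ≤ z → 0 < Ψ z)
    (hΨO : Ψ =O[atTop] fun z : ℝ => z ^ (2:ℕ)) :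
    ¬ IntegrableOn (fun z => Real.exp (∫ u in θ..z, R u) * (1 / Ψ z))
        (Set.Ioi θ) := by
  intro hint
  have hρ1 : (0:ℝ) < ρ + 1 := by linarith
  set L : ℝ := (64 : ℝ) ^ (ρ+1)⁻¹ with hLdef
  have hL1 : 1 < L := by
    rw [hLdef]
    rw [Real.one_lt_rpow_iff_of_pos (by norm_num)]
    exact Or.inl ⟨by norm_num, inv_pos.2 hρ1⟩
  have hL0 : 0 < L := lt_trans one_pos hL1
  have hkey : L ^ (ρ+1) = (64:ℝ) := by
    rw [hLdef, ← Real.rpow_mul (by norm_num : (0:ℝ) ≤ 64),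
      inv_mul_cancel₀ (ne_of_gt hρ1), Real.rpow_one]
  have hL64 : ∀ m : ℕ, ((L ^ m : ℝ)) ^ (ρ+1) = 64 ^ m := by
    intro m
    rw [← Real.rpow_natCast L m, ← Real.rpow_mul hL0.le, mul_comm ((m:ℕ):ℝ) (ρ+1),
      Real.rpow_mul hL0.le, hkey, Real.rpow_natCast]
  obtain ⟨m₀, hm₀⟩ : ∃ m : ℕ, θ < L ^ m := pow_unbounded_of_one_lt θ hL1
  have hLm : ∀ k : ℕ, m₀ ≤ k → θ < L ^ k :=
    fun k hk => lt_of_lt_of_le hm₀ (pow_le_pow_right₀ hL1.le hk)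
  have harg : ∀ (c : ℝ) (k : ℕ), 1 ≤ c → m₀ ≤ k → θ ≤ c * L ^ k := by
    intro c k hc hk
    have h1 := (hLm k hk).le
    nlinarith [pow_pos hL0 k]
  have hq : ∀ (k : ℕ) (c : ℝ), m₀ ≤ k → 1 ≤ c →
      R (c * L ^ k) / (c * L ^ k) ^ ρ = ℓ (c * L ^ k) := by
    intro k c hk hc
    have hpos : 0 < c * L ^ k := by positivity
    rw [hR _ (harg c k hc hk),
      mul_div_cancel_left₀ _ (ne_of_gt (Real.rpow_pos_of_pos hpos ρ))]
  set A : ℕ → Set ℝ := fun n => Set.Icc 1 (L^2) ∩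
    ⋂ k : ℕ, {c | n + m₀ ≤ k →
      R (c * L ^ k) / (c * L ^ k) ^ ρ ∈ Set.Icc (ℓ (L ^ k)/2) (2 * ℓ (L ^ k))}
    with hAdef
  have hAmem : ∀ n c, c ∈ A n ↔ (c ∈ Set.Icc 1 (L^2) ∧ ∀ k, n + m₀ ≤ k →
      R (c * L ^ k) / (c * L ^ k) ^ ρ ∈ Set.Icc (ℓ (L ^ k)/2) (2 * ℓ (L ^ k))) := by
    intro n c
    simp [hAdef, Set.mem_iInter, Set.mem_setOf_eq]
  have hAmeas : ∀ n, MeasurableSet (A n) := by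
    intro n
    apply MeasurableSet.inter measurableSet_Icc
    apply MeasurableSet.iInter; intro k
    by_cases h : n + m₀ ≤ k
    · have hmf : Measurable fun c : ℝ => R (c * L ^ k) / (c * L ^ k) ^ ρ := by fun_prop
      have : {c : ℝ | n + m₀ ≤ k →
          R (c * L ^ k) / (c * L ^ k) ^ ρ ∈ Set.Icc (ℓ (L ^ k)/2) (2 * ℓ (L ^ k))}
          = (fun c : ℝ => R (c * L ^ k) / (c * L ^ k) ^ ρ) ⁻¹'
            (Set.Icc (ℓ (L ^ k)/2) (2 * ℓ (L ^ k))) := by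
        ext c; simp [h]
      rw [this]
      exact hmf measurableSet_Icc
    · have : {c : ℝ | n + m₀ ≤ k →
          R (c * L ^ k) / (c * L ^ k) ^ ρ ∈ Set.Icc (ℓ (L ^ k)/2) (2 * ℓ (L ^ k))}
          = Set.univ := by
        ext c; simp [h]
      rw [this]; exact MeasurableSet.univ
  have hAmono : Monotone A := by
    intro a b hab c hc
    rw [hAmem] at hc ⊢
    exact ⟨hc.1, fun k hk => hc.2 k (by omega)⟩
  have hAcover : Set.Icc 1 (L^2) ⊆ ⋃ n, A n := by
    intro c hc
    have hc1 : (1:ℝ) ≤ c := hc.1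
    have hcpos : 0 < c := lt_of_lt_of_le one_pos hc1
    have htd : Tendsto (fun k : ℕ => ℓ (c * L ^ k) / ℓ (L ^ k)) atTop (nhds 1) :=
      (hℓslow c hcpos).comp (tendsto_pow_atTop_atTop_of_one_lt hL1)
    have hev : ∀ᶠ k : ℕ in atTop, ℓ (c * L ^ k) / ℓ (L ^ k) ∈ Set.Icc (1/2 : ℝ) 2 :=
      htd.eventually (Icc_mem_nhds (by norm_num) (by norm_num))
    obtain ⟨N, hN⟩ := eventually_atTop.mp hev
    refine Set.mem_iUnion.2 ⟨N, (hAmem N c).2 ⟨hc, ?_⟩⟩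
    intro k hk
    have hkm : m₀ ≤ k := by omega
    have hl := hℓpos (L ^ k) (hLm k hkm).le
    have hmem := Set.mem_Icc.1 (hN k (by omega))
    rw [hq k c hkm hc1]
    refine Set.mem_Icc.2 ⟨?_, ?_⟩
    · have := (le_div_iff₀ hl).1 hmem.1; linarith
    · have := (div_le_iff₀ hl).1 hmem.2; linarith
  have hU : (⋃ n, A n) = Set.Icc 1 (L^2) :=
    subset_antisymm (Set.iUnion_subset fun n => Set.inter_subset_left) hAcover
  have htm := tendsto_measure_iUnion_atTop (μ := volume) hAmono
  rw [hU, Real.volume_Icc] at htm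
  set δ : ℝ := (L - 1)/2 with hδdef
  have hδpos : 0 < δ := by rw [hδdef]; linarith
  have hL21 : 0 < L^2 - 1 := by nlinarith
  have hlt : ENNReal.ofReal (L^2 - 1 - δ) < ENNReal.ofReal (L^2 - 1) := by
    rw [ENNReal.ofReal_lt_ofReal_iff hL21]; linarith
  obtain ⟨N₁, hN₁⟩ := (htm.eventually (eventually_gt_nhds hlt)).exists
  set Eset : Set ℝ := A N₁ with hEdef
  have hN₁' : ENNReal.ofReal (L^2 - 1 - δ) < volume Eset := hN₁
  set K0 : ℕ := N₁ + m₀ with hK0def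
  have hEsub : Eset ⊆ Set.Icc 1 (L^2) := Set.inter_subset_left
  have hEmes : MeasurableSet Eset := hAmeas N₁
  have hEP : ∀ c ∈ Eset, ∀ k, K0 ≤ k →
      (ℓ (L^k)/2 ≤ ℓ (c * L ^ k) ∧ ℓ (c * L ^ k) ≤ 2 * ℓ (L^k)) := by
    intro c hc k hk
    have h1 := ((hAmem N₁ c).1 hc).2 k hk
    have hc1 : 1 ≤ c := ((hAmem N₁ c).1 hc).1.1
    have hkm : m₀ ≤ k := by omega
    rw [hq k c hkm hc1] at h1
    exact Set.mem_Icc.1 h1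
  set E' : Set ℝ := Eset ∩ Set.Icc L (L^2) with hE'def
  set S₁ : Set ℝ := Eset ∩ Set.Icc 1 L with hS₁def
  set S₂ : Set ℝ := (fun c => L * c) ⁻¹' E' with hS₂def
  have hE'mes : MeasurableSet E' := hEmes.inter measurableSet_Icc
  have hS₂mes : MeasurableSet S₂ := (measurable_const_mul L) hE'mes
  have hvLo : 0 < L^2 - L - δ := by rw [hδdef]; nlinarith
  -- volume E' is big
  have hE'big : ENNReal.ofReal (L^2 - L - δ) < volume E' := by
    by_contra hcon
    push_neg at hcon
    have hsplit : Eset ⊆ (Eset ∩ Set.Ico 1 L) ∪ E' := by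
      intro x hx
      rcases lt_or_ge x L with h | h
      · exact Or.inl ⟨hx, (hEsub hx).1, h⟩
      · exact Or.inr ⟨hx, h, (hEsub hx).2⟩
    have h1 : volume Eset ≤ ENNReal.ofReal (L - 1) + ENNReal.ofReal (L^2 - L - δ) := by
      calc volume Eset ≤ volume ((Eset ∩ Set.Ico 1 L) ∪ E') := measure_mono hsplit
        _ ≤ volume (Eset ∩ Set.Ico 1 L) + volume E' := measure_union_le _ _
        _ ≤ ENNReal.ofReal (L - 1) + ENNReal.ofReal (L^2 - L - δ) := by
            refine add_le_add ?_ hcon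
            calc volume (Eset ∩ Set.Ico 1 L) ≤ volume (Set.Ico 1 L) :=
                  measure_mono Set.inter_subset_right
              _ = ENNReal.ofReal (L - 1) := Real.volume_Ico
    rw [← ENNReal.ofReal_add (by linarith) (by linarith)] at h1
    have : (L - 1) + (L^2 - L - δ) = L^2 - 1 - δ := by ring
    rw [this] at h1
    exact absurd (lt_of_lt_of_le hN₁' h1) (lt_irrefl _)
  -- volume S₁ is big
  have hS₁big : ENNReal.ofReal δ < volume S₁ := by
    by_contra hcon
    push_neg at hcon
    have hsplit : Eset ⊆ S₁ ∪ (Eset ∩ Set.Ioc L (L^2)) := by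
      intro x hx
      rcases le_or_gt x L with h | h
      · exact Or.inl ⟨hx, (hEsub hx).1, h⟩
      · exact Or.inr ⟨hx, h, (hEsub hx).2⟩
    have h1 : volume Eset ≤ ENNReal.ofReal δ + ENNReal.ofReal (L^2 - L) := by
      calc volume Eset ≤ volume (S₁ ∪ (Eset ∩ Set.Ioc L (L^2))) := measure_mono hsplit
        _ ≤ volume S₁ + volume (Eset ∩ Set.Ioc L (L^2)) := measure_union_le _ _
        _ ≤ ENNReal.ofReal δ + ENNReal.ofReal (L^2 - L) := by
            refine add_le_add hcon ?_
            calc volume (Eset ∩ Set.Ioc L (L^2)) ≤ volume (Set.Ioc L (L^2)) :=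
                  measure_mono Set.inter_subset_right
              _ = ENNReal.ofReal (L^2 - L) := Real.volume_Ioc
    rw [← ENNReal.ofReal_add (by linarith) (by nlinarith)] at h1
    have : δ + (L^2 - L) = L^2 - 1 - δ := by rw [hδdef]; ring
    rw [this] at h1
    exact absurd (lt_of_lt_of_le hN₁' h1) (lt_irrefl _)
  have hS₂vol : volume S₂ = ENNReal.ofReal L⁻¹ * volume E' := by
    rw [hS₂def, Real.volume_preimage_mul_left (ne_of_gt hL0)]
    congr 1
    rw [abs_of_pos (inv_pos.2 hL0)]
  have hS₁₂sub : S₁ ∪ S₂ ⊆ Set.Icc 1 L := by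
    intro c hc
    rcases hc with h | h
    · exact h.2
    · have h1 : L * c ∈ Set.Icc L (L^2) := h.2
      constructor
      · have := h1.1
        nlinarith
      · have := h1.2
        nlinarith
  -- S₁ ∩ S₂ nonempty
  have hsum : ENNReal.ofReal δ + ENNReal.ofReal (L⁻¹ * (L^2 - L - δ)) ≤
      volume S₁ + volume S₂ := by
    refine add_le_add hS₁big.le ?_
    rw [hS₂vol, ENNReal.ofReal_mul (by positivity)]
    exact mul_le_mul_right hE'big.le _
  have hmulpos : 0 < L⁻¹ * (L^2 - L - δ) := mul_pos (inv_pos.2 hL0) hvLo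
  have hgt : ENNReal.ofReal (L - 1) <
      ENNReal.ofReal δ + ENNReal.ofReal (L⁻¹ * (L^2 - L - δ)) := by
    rw [← ENNReal.ofReal_add hδpos.le hmulpos.le]
    rw [ENNReal.ofReal_lt_ofReal_iff (by linarith)]
    have h2 : L⁻¹ * (L^2 - L - δ) = L - 1 - δ/L := by
      field_simp
    rw [h2]
    have h4 : δ/L < δ := div_lt_self hδpos hL1
    linarith
  have hne : volume (S₁ ∩ S₂) ≠ 0 := by
    intro h0
    have hu := measure_union_add_inter (μ := volume) S₁ hS₂mes
    rw [h0, add_zero] at hu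
    have hle : volume (S₁ ∪ S₂) ≤ ENNReal.ofReal (L - 1) := by
      calc volume (S₁ ∪ S₂) ≤ volume (Set.Icc 1 L) := measure_mono hS₁₂sub
        _ = ENNReal.ofReal (L - 1) := Real.volume_Icc
    have : volume S₁ + volume S₂ < volume S₁ + volume S₂ := by
      calc volume S₁ + volume S₂ = volume (S₁ ∪ S₂) := hu.symm
        _ ≤ ENNReal.ofReal (L - 1) := hle
        _ < ENNReal.ofReal δ + ENNReal.ofReal (L⁻¹ * (L^2 - L - δ)) := hgt
        _ ≤ volume S₁ + volume S₂ := hsum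
    exact absurd this (lt_irrefl _)
  obtain ⟨cs, hcs⟩ := nonempty_of_measure_ne_zero hne
  have hcsE : cs ∈ Eset := hcs.1.1
  have hcsL : L * cs ∈ Eset := hcs.2.1
  -- the chain bound
  have hc₀pos : 0 < ℓ (L ^ K0) := hℓpos _ (hLm K0 (by omega)).le
  have hchain : ∀ k, K0 ≤ k → ℓ (L^k) / 4 ≤ ℓ (L^(k+1)) := by
    intro k hk
    have h1 := (hEP cs hcsE (k+1) (by omega)).2
    have h2 := (hEP (L * cs) hcsL k hk).1
    have heq : (L * cs) * L ^ k = cs * L ^ (k+1) := by ring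
    rw [heq] at h2
    linarith
  have hlow : ∀ k, K0 ≤ k → ℓ (L ^ K0) * (1/4)^(k - K0) ≤ ℓ (L ^ k) := by
    intro k hk
    induction k, hk using Nat.le_induction with
    | base => simp
    | succ n hn ih =>
      have h := hchain n hn
      have hsub : n + 1 - K0 = (n - K0) + 1 := by omega
      rw [hsub, pow_succ]
      nlinarith [pow_pos (show (0:ℝ) < 1/4 by norm_num) (n - K0)]
  -- Ψ bound
  rw [Asymptotics.isBigO_iff] at hΨO
  obtain ⟨C, hC⟩ := hΨO
  obtain ⟨zΨ, hzΨ⟩ := eventually_atTop.mp hC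
  set CΨ : ℝ := max C 1 with hCΨdef
  have hCΨ1 : 1 ≤ CΨ := le_max_right _ _
  have hCΨpos : 0 < CΨ := lt_of_lt_of_le one_pos hCΨ1
  have hΨle : ∀ z, zΨ ≤ z → 1 ≤ z → Ψ z ≤ CΨ * z^2 := by
    intro z hz h1
    have h2 := hzΨ z hz
    have hz2 : ‖(z:ℝ) ^ (2:ℕ)‖ = z^2 := by
      rw [Real.norm_eq_abs, abs_of_nonneg (by positivity)]
    rw [Real.norm_eq_abs, hz2] at h2
    have h3 : Ψ z ≤ C * z^2 := le_trans (le_abs_self _) h2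
    have hCC : C ≤ CΨ := le_max_left C 1
    nlinarith [mul_nonneg (sub_nonneg.2 hCC) (sq_nonneg z)]
  -- constants
  have hE'fin : volume E' ≠ ⊤ := by
    refine ne_of_lt (lt_of_le_of_lt (measure_mono Set.inter_subset_right) ?_)
    rw [Real.volume_Icc]
    exact ENNReal.ofReal_lt_top
  set cE : ℝ := (volume E').toReal with hcEdef
  have hcE : 0 < cE := by
    apply ENNReal.toReal_pos _ hE'fin
    intro h0
    rw [h0] at hE'big
    exact absurd hE'big (by simp)
  set c₀ : ℝ := ℓ (L ^ K0) with hc₀def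
  set C₁ : ℝ := 32 * 4 ^ K0 * c₀ * cE / L^2 with hC₁def
  have hC₁pos : 0 < C₁ := by rw [hC₁def]; positivity
  -- the block bound
  have hblock : ∀ k, K0 ≤ k → ∀ z, L ^ (k+2) ≤ z → C₁ * 16^k ≤ ∫ u in θ..z, R u := by
    intro k hk z hz
    have hθz : θ ≤ z := le_trans (hLm (k+2) (by omega)).le hz
    set G : Set ℝ := (fun u => u * (L^k)⁻¹) ⁻¹' E' with hGdef
    have hGmes : MeasurableSet G := (measurable_mul_const ((L^k)⁻¹)) hE'mes
    have hLk : (0:ℝ) < L^k := pow_pos hL0 k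
    have hGsub : G ⊆ Set.Icc (L^(k+1)) (L^(k+2)) := by
      intro u hu
      have hIcc : u * (L^k)⁻¹ ∈ Set.Icc L (L^2) := hu.2
      have h1 := hIcc.1
      have h2 := hIcc.2
      rw [← div_eq_mul_inv] at h1 h2
      constructor
      · have := (le_div_iff₀ hLk).1 h1
        calc L^(k+1) = L * L^k := by ring
          _ ≤ u := this
      · have := (div_le_iff₀ hLk).1 h2
        calc u ≤ L^2 * L^k := this
          _ = L^(k+2) := by ring
    have hGsubz : G ⊆ Set.Ioc θ z := fun u hu =>
      ⟨lt_of_lt_of_le (hLm (k+1) (by omega)) (hGsub hu).1, le_trans (hGsub hu).2 hz⟩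
    have hGvol : volume G = ENNReal.ofReal (L^k) * volume E' := by
      rw [hGdef, Real.volume_preimage_mul_right (by positivity : ((L:ℝ)^k)⁻¹ ≠ 0)]
      congr 1
      rw [inv_inv, abs_of_pos hLk]
    have hGfin : volume G ≠ ⊤ := by
      rw [hGvol]
      exact ENNReal.mul_ne_top ENNReal.ofReal_ne_top hE'fin
    have hGtoReal : (volume G).toReal = L^k * cE := by
      rw [hGvol, ENNReal.toReal_mul, ENNReal.toReal_ofReal hLk.le, hcEdef]
    set rlo : ℝ := (64^(k+1) / L^(k+2)) * (c₀ * (1/4)^(k-K0) / 2) with hrlodef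
    have hpt : ∀ u ∈ G, rlo ≤ R u := by
      intro u hu
      have hu1 : L^(k+1) ≤ u := (hGsub hu).1
      have hu2 : u ≤ L^(k+2) := (hGsub hu).2
      have hupos : 0 < u := lt_of_lt_of_le (pow_pos hL0 (k+1)) hu1
      have hθu : θ ≤ u := le_trans (hLm (k+1) (by omega)).le hu1
      have hcE' : u * (L^k)⁻¹ ∈ E' := hu
      have hceq : (u * (L^k)⁻¹) * L^k = u := by field_simp
      have hℓu : c₀ * (1/4)^(k-K0)/2 ≤ ℓ u := by
        have h1 := (hEP _ hcE'.1 k hk).1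
        rw [hceq] at h1
        have h2 := hlow k hk
        linarith
      have hrpow : 64^(k+1) / L^(k+2) ≤ u ^ ρ := by
        have h1 : ((L:ℝ)^(k+1)) ^ (ρ+1) ≤ u ^ (ρ+1) :=
          Real.rpow_le_rpow (by positivity) hu1 hρ1.le
        rw [hL64 (k+1)] at h1
        have h2 : u ^ (ρ+1) = u ^ ρ * u := by
          rw [Real.rpow_add hupos, Real.rpow_one]
        rw [h2] at h1
        have hρpos : 0 < u ^ ρ := Real.rpow_pos_of_pos hupos ρ
        rw [div_le_iff₀ (pow_pos hL0 (k+2))]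
        nlinarith
      rw [hR u hθu, hrlodef]
      have hℓnn : 0 ≤ c₀ * (1/4)^(k-K0)/2 := by positivity
      exact mul_le_mul hrpow hℓu hℓnn (Real.rpow_pos_of_pos hupos ρ).le
    have hIoc := (hRloc z hθz).1
    have hGint : IntegrableOn R G volume := hIoc.mono_set hGsubz
    have hnn : 0 ≤ᵐ[volume.restrict (Set.Ioc θ z)] R :=
      (ae_restrict_iff' measurableSet_Ioc).2 (ae_of_all _ (fun u hu => (hRpos u hu.1.le).le))
    have h1 : ∫ u in G, R u ≤ ∫ u in Set.Ioc θ z, R u :=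
      setIntegral_mono_set hIoc hnn (HasSubset.Subset.eventuallyLE hGsubz)
    have h2 : rlo * (volume G).toReal ≤ ∫ u in G, R u :=
      setIntegral_ge_of_const_le_real hGmes hGfin hpt hGint
    rw [intervalIntegral.integral_of_le hθz]
    have hcalc : C₁ * 16^k ≤ rlo * (volume G).toReal := by
      rw [hGtoReal, hrlodef, hC₁def]
      have e1 : (1/4:ℝ)^(k-K0) = (1/4)^k * 4^K0 := by
        rw [pow_sub₀ _ (by norm_num : (1/4:ℝ) ≠ 0) hk]
        rw [div_pow, one_pow]
        field_simp
        rw [← mul_pow]; norm_num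
      have e5 : (64:ℝ)^k = 16^k * 4^k := by
        rw [← mul_pow]; norm_num
      have e1' : (1/4:ℝ)^k = ((4:ℝ)^k)⁻¹ := by
        rw [div_pow, one_pow, one_div]
      have e3 : (64:ℝ)^(k+1) = 64 * 64^k := by rw [pow_succ]; ring
      have e4 : (L:ℝ)^(k+2) = L^k * L^2 := by rw [pow_add]
      rw [e1, e1', e3, e4, e5]
      have h4k : (0:ℝ) < 4^k := by positivity
      apply le_of_eq
      field_simp
      ring
    linarith
  -- superlinear growth beats the logarithm
  have hlogL : 0 < Real.log L := Real.log_pos hL1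
  set a : ℝ := 2 * Real.log L with hadef
  set b : ℝ := Real.log CΨ + 6 * Real.log L with hbdef
  have hapos : 0 ≤ a := by rw [hadef]; positivity
  set M : ℕ := max K0 (Nat.ceil ((a + |b|)/C₁)) with hMdef
  have hsuper : ∀ k : ℕ, M ≤ k → a * k + b ≤ C₁ * 16^k := by
    intro k hkM
    have h2 : (Nat.ceil ((a + |b|)/C₁) : ℝ) ≤ (k:ℝ) + 1 := by
      have : Nat.ceil ((a + |b|)/C₁) ≤ k + 1 :=
        Nat.le_succ_of_le (le_trans (le_max_right _ _) hkM)
      exact_mod_cast this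
    have h1 : (a + |b|)/C₁ ≤ (k:ℝ) + 1 := le_trans (Nat.le_ceil _) h2
    have h3 : a + |b| ≤ C₁ * ((k:ℝ)+1) := by
      rw [div_le_iff₀ hC₁pos] at h1; linarith
    have h4 := aux_sq_le_16pow k
    have hknn : (0:ℝ) ≤ k := Nat.cast_nonneg k
    have h5 : (a + |b|) * ((k:ℝ)+1) ≤ C₁ * (((k:ℝ)+1)^2) := by nlinarith
    have h6 : C₁ * (((k:ℝ)+1)^2) ≤ C₁ * 16^k :=
      mul_le_mul_of_nonneg_left h4 hC₁pos.le
    have h7 : 0 ≤ |b| * k := mul_nonneg (abs_nonneg b) hknn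
    nlinarith [le_abs_self b]
  -- final: the integrand is eventually at least 1
  set Z₀ : ℝ := max (max (L^(M+3)) zΨ) (max θ 1) with hZdef
  have hmain : ∀ z, Z₀ ≤ z → 1 ≤ Real.exp (∫ u in θ..z, R u) * (1/Ψ z) := by
    intro z hz
    have hz1 : (1:ℝ) ≤ z := le_trans (le_trans (le_max_right θ 1) (le_max_right _ _)) hz
    have hzθ : θ ≤ z := le_trans (le_trans (le_max_left θ 1) (le_max_right _ _)) hz
    have hzΨ2 : zΨ ≤ z := le_trans (le_trans (le_max_right _ _) (le_max_left _ _)) hz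
    have hzM : L^(M+3) ≤ z := le_trans (le_trans (le_max_left _ _) (le_max_left _ _)) hz
    have hzpos : 0 < z := lt_of_lt_of_le one_pos hz1
    set t : ℝ := Real.logb L z with htdef
    set n : ℕ := Nat.floor t with hndef
    have htnn : 0 ≤ t := by
      rw [htdef]; exact Real.logb_nonneg hL1 hz1
    have htn : (n:ℝ) ≤ t := Nat.floor_le htnn
    have htn2 : t < n + 1 := Nat.lt_floor_add_one t
    have hMn : M + 3 ≤ n := by
      apply Nat.le_floor
      rw [htdef, Real.le_logb_iff_rpow_le hL1 hzpos]
      rw [Real.rpow_natCast]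
      exact hzM
    set k : ℕ := n - 2 with hkdef
    have hn2 : n = k + 2 := by omega
    have hkM : M ≤ k := by omega
    have hkK0 : K0 ≤ k := le_trans (le_max_left _ _) hkM
    have hLnz : L ^ (k+2) ≤ z := by
      have h1 : (L:ℝ) ^ ((n:ℕ):ℝ) ≤ L ^ t :=
        Real.rpow_le_rpow_of_exponent_le hL1.le htn
      rw [htdef, Real.rpow_logb hL0 (ne_of_gt hL1) hzpos] at h1
      rw [← hn2, ← Real.rpow_natCast L n]
      exact h1
    have hIbound := hblock k hkK0 z hLnz
    have hsup := hsuper k hkM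
    have hlogz : Real.log z ≤ ((n:ℝ)+1) * Real.log L := by
      have h1 : t < (n:ℝ) + 1 := htn2
      rw [htdef, Real.logb, div_lt_iff₀ hlogL] at h1
      linarith
    have hexp : CΨ * z^2 ≤ Real.exp (∫ u in θ..z, R u) := by
      have hn' : ((n:ℝ)+1) = (k:ℝ) + 3 := by rw [hn2]; push_cast; ring
      have h5 : Real.log CΨ + 2 * Real.log z ≤ ∫ u in θ..z, R u := by
        have h6 : 2 * Real.log z ≤ 2*((k:ℝ)+3) * Real.log L := by
          rw [← hn']; nlinarith
        calc Real.log CΨ + 2*Real.log z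
            ≤ Real.log CΨ + 2*((k:ℝ)+3)*Real.log L := by linarith
          _ = a * k + b := by rw [hadef, hbdef]; ring
          _ ≤ C₁ * 16^k := hsup
          _ ≤ _ := hIbound
      calc CΨ * z^2 = Real.exp (Real.log CΨ + 2*Real.log z) := by
            rw [Real.exp_add, Real.exp_log hCΨpos,
              show (2:ℝ)*Real.log z = Real.log (z^2) by
                rw [Real.log_pow]; push_cast; ring,
              Real.exp_log (by positivity)]
        _ ≤ _ := Real.exp_le_exp.2 h5
    have hΨz := hΨpos z hzθ
    have hΨz2 := hΨle z hzΨ2 hz1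
    rw [mul_one_div, le_div_iff₀ hΨz, one_mul]
    nlinarith [sq_nonneg z]
  -- contradiction with integrability
  have hfin := hint.measure_ge_lt_top (by norm_num : (0:ℝ) < 1)
  have hsub2 : Set.Ioi Z₀ ⊆
      {z : ℝ | 1 ≤ Real.exp (∫ u in θ..z, R u) * (1/Ψ z)} :=
    fun z hz => hmain z (le_of_lt hz)
  have h7 : (volume.restrict (Set.Ioi θ)) (Set.Ioi Z₀) < ⊤ :=
    lt_of_le_of_lt (measure_mono hsub2) hfin
  rw [Measure.restrict_apply measurableSet_Ioi, Set.Ioi_inter_Ioi, Real.volume_Ioi] at h7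
  exact absurd h7 (by simp)
end
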